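/- Let G be a finite simple connected graph on n ≥ 2 vertices that is not complete. Then G admits a Sudoku colouring with exactly two uncoloured vertices; consequently sn(G) ≤ n − 2. -/

import Mathlib

/-- A proper `k`-colouring of `G` using colours `{1, …, k}`. -/
def IsProperColouring {V : Type*} (G : SimpleGraph V) (k : ℕ) (φ : V → ℕ) : Prop :=
  (∀ v, φ v ∈ Finset.Icc 1 k) ∧ ∀ ⦃u v⦄, G.Adj u v → φ u ≠ φ v

/-- A partial proper `k`-colouring of `G` (uncoloured vertices get `none`). -/
def IsPartialProper {V : Type*} (G : SimpleGraph V) (k : ℕ) (ψ : V → Option ℕ) : Prop :=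
  (∀ v c, ψ v = some c → c ∈ Finset.Icc 1 k) ∧
    ∀ ⦃u v⦄, G.Adj u v → ∀ c, ψ u = some c → ψ v ≠ some c

/-- `φ` extends the partial colouring `ψ`. -/
def ExtendsPartial {V : Type*} (φ : V → ℕ) (ψ : V → Option ℕ) : Prop :=
  ∀ v c, ψ v = some c → φ v = c

/-- A Sudoku colouring: a partial proper `k`-colouring with exactly one extension to a
proper `k`-colouring of all of `G`. -/
def IsSudoku {V : Type*} (G : SimpleGraph V) (k : ℕ) (ψ : V → Option ℕ) : Prop :=
  IsPartialProper G k ψ ∧ ∃! φ : V → ℕ, IsProperColouring G k φ ∧ ExtendsPartial φ ψ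

/-- The Sudoku number: the least number of coloured vertices in a Sudoku colouring. -/
noncomputable def sudokuNumber {V : Type*} [Fintype V] (G : SimpleGraph V) (k : ℕ) : ℕ :=
  sInf {m | ∃ ψ : V → Option ℕ, IsSudoku G k ψ ∧
    (Finset.univ.filter fun v => (ψ v).isSome).card = m}

/-- The set of colours appearing on the coloured neighbours of `v` under `ψ`. -/
def nbrColours {V : Type*} [Fintype V] [DecidableEq V] (G : SimpleGraph V)
    [DecidableRel G.Adj] (ψ : V → Option ℕ) (v : V) : Finset ℕ :=
  (G.neighborFinset v).biUnion fun u => (ψ u).toFinset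

/-- A vertex is full (w.r.t. a proper `k`-colouring `φ`) if every colour other than its own
appears on its neighbourhood. -/
def IsFull {V : Type*} [Fintype V] [DecidableEq V] (G : SimpleGraph V)
    [DecidableRel G.Adj] (k : ℕ) (φ : V → ℕ) (v : V) : Prop :=
  (G.neighborFinset v).image φ = Finset.Icc 1 k \ {φ v}

/-- A proper `k`-colouring is 1-minimal if it has as few colour-1 vertices as possible. -/
def IsOneMinimal {V : Type*} [Fintype V] (G : SimpleGraph V) (k : ℕ) (φ : V → ℕ) : Prop :=
  IsProperColouring G k φ ∧ ∀ φ' : V → ℕ, IsProperColouring G k φ' →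
    (Finset.univ.filter fun v => φ v = 1).card ≤ (Finset.univ.filter fun v => φ' v = 1).card

set_option linter.unusedSectionVars false

namespace SudokuAux

variable {V : Type*} (G : SimpleGraph V) (k : ℕ)

/-- Auxiliary notion of fullness (propositional form). -/
def Fullv (c : V → ℕ) (v : V) : Prop :=
  ∀ b, b ∈ Finset.Icc 1 k → b ≠ c v → ∃ u, G.Adj v u ∧ c u = b

/-- A rigid pair: any proper colouring agreeing with `c` off `{p,q}` equals `c`. -/
def Rigid (c : V → ℕ) (p q : V) : Prop :=
  ∀ φ : V → ℕ, IsProperColouring G k φ → (∀ v, v ≠ p → v ≠ q → φ v = c v) → φ = c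

variable {G k}

lemma rigid_of_nonadj {c : V → ℕ} {p q : V}
    (hfp : Fullv G k c p) (hfq : Fullv G k c q) (hnadj : ¬ G.Adj p q) :
    Rigid G k c p q := by
  intro φ hφ hagree
  have key : ∀ r s : V, Fullv G k c r → ¬ G.Adj r s → φ r = c r → False → True := fun _ _ _ _ _ _ => trivial
  have hp : φ p = c p := by
    by_contra hne
    obtain ⟨u, hu, hcu⟩ := hfp (φ p) (hφ.1 p) hne
    have hup : u ≠ p := fun h => G.loopless.irrefl p (h ▸ hu)
    have huq : u ≠ q := fun h => hnadj (h ▸ hu)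
    have h1 : φ u = c u := hagree u hup huq
    exact hφ.2 hu ((h1.trans hcu).symm)
  have hq : φ q = c q := by
    by_contra hne
    obtain ⟨u, hu, hcu⟩ := hfq (φ q) (hφ.1 q) hne
    have huq : u ≠ q := fun h => G.loopless.irrefl q (h ▸ hu)
    have hup : u ≠ p := fun h => hnadj (G.adj_symm (h ▸ hu))
    have h1 : φ u = c u := hagree u hup huq
    exact hφ.2 hu ((h1.trans hcu).symm)
  funext v
  by_cases h1 : v = p
  · rw [h1]; exact hp
  · by_cases h2 : v = q
    · rw [h2]; exact hq
    · exact hagree v h1 h2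

lemma rigid_of_dup {c : V → ℕ} {p q x : V}
    (hfp : Fullv G k c p) (hfq : Fullv G k c q) (hadj : G.Adj p q)
    (hx1 : G.Adj p x) (hxq : x ≠ q) (hxc : c x = c q) :
    Rigid G k c p q := by
  intro φ hφ hagree
  have hxp : x ≠ p := fun h => G.loopless.irrefl p (h ▸ hx1)
  have hp : φ p = c p := by
    by_contra hne
    obtain ⟨u, hu, hcu⟩ := hfp (φ p) (hφ.1 p) hne
    have hup : u ≠ p := fun h => G.loopless.irrefl p (h ▸ hu)
    by_cases huq : u = q
    · have h1 : φ x = c x := hagree x hxp hxq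
      have h2 : φ x = φ p := by rw [h1, hxc, ← huq, hcu]
      exact hφ.2 hx1 h2.symm
    · have h1 : φ u = c u := hagree u hup huq
      exact hφ.2 hu ((h1.trans hcu).symm)
  have hq : φ q = c q := by
    by_contra hne
    obtain ⟨u, hu, hcu⟩ := hfq (φ q) (hφ.1 q) hne
    have huq : u ≠ q := fun h => G.loopless.irrefl q (h ▸ hu)
    by_cases hup : u = p
    · have h2 : φ q = φ p := by rw [hp, ← hup, hcu]
      exact hφ.2 hadj.symm h2
    · have h1 : φ u = c u := hagree u hup huq
      exact hφ.2 hu ((h1.trans hcu).symm)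
  funext v
  by_cases h1 : v = p
  · rw [h1]; exact hp
  · by_cases h2 : v = q
    · rw [h2]; exact hq
    · exact hagree v h1 h2

end SudokuAux

section Main

open SudokuAux Finset

variable {V : Type*} [Fintype V] [DecidableEq V]
variable {G : SimpleGraph V} [DecidableRel G.Adj] {k : ℕ}

/-- From `χ(G) = k` we get a proper colouring into `{1,…,k}`. -/
lemma exists_proper (hχ : G.chromaticNumber = k) : ∃ c, IsProperColouring G k c := by
  have hcol : G.Colorable k := by
    rw [← SimpleGraph.chromaticNumber_le_iff_colorable, hχ]
  obtain ⟨C⟩ := hcol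
  refine ⟨fun v => (C v).val + 1, fun v => ?_, fun u v huv => ?_⟩
  · simp only [Finset.mem_Icc]
    exact ⟨Nat.le_add_left 1 _, Nat.succ_le_of_lt (C v).isLt⟩
  · intro h
    apply C.valid huv
    have h' : (C u).val = (C v).val := by simpa using h
    exact Fin.ext h'

lemma k_pos (hχ : G.chromaticNumber = k) (hn : 2 ≤ Fintype.card V) : 1 ≤ k := by
  by_contra h
  have hk0 : k = 0 := by omega
  subst hk0
  have hcol : G.Colorable 0 := by
    rw [← SimpleGraph.chromaticNumber_le_iff_colorable, hχ]
  obtain ⟨C⟩ := hcol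
  have : Nonempty V := Fintype.card_pos_iff.mp (by omega)
  exact (C this.some).elim0

/-- Every proper `k`-colouring uses all colours of `{1,…,k}` (since `χ(G) = k`). -/
lemma used_all (hχ : G.chromaticNumber = k) (hn : 2 ≤ Fintype.card V)
    {c : V → ℕ} (hc : IsProperColouring G k c) :
    ∀ b, b ∈ Finset.Icc 1 k → ∃ v, c v = b := by
  intro b hb
  by_contra hcon
  push_neg at hcon
  have hk1 : 1 ≤ k := k_pos hχ hn
  rw [Finset.mem_Icc] at hb
  -- relabel to get a (k-1)-colouring
  have hbound : ∀ v, 1 ≤ c v ∧ c v ≤ k := by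
    intro v; have := hc.1 v; rw [Finset.mem_Icc] at this; exact this
  set e : V → ℕ := fun v => if b < c v then c v - 1 else c v with he
  have he1 : ∀ v, 1 ≤ e v ∧ e v ≤ k - 1 := by
    intro v
    have h1 := hbound v
    have h2 := hcon v
    simp only [he]
    split_ifs <;> omega
  have hevalid : ∀ ⦃u v⦄, G.Adj u v → e u ≠ e v := by
    intro u v huv
    have h1 := hbound u
    have h2 := hbound v
    have h3 := hcon u
    have h4 := hcon v
    have h5 := hc.2 huv
    simp only [he]
    split_ifs <;> omega
  have hcol : G.Colorable (k - 1) := by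
    refine ⟨SimpleGraph.Coloring.mk (fun v => ⟨e v - 1, ?_⟩) ?_⟩
    · have := he1 v; omega
    · intro u v huv h
      have h1 := he1 u
      have h2 := he1 v
      have h3 := hevalid huv
      have h4 : e u - 1 = e v - 1 := congrArg Fin.val h
      omega
  have hle : G.chromaticNumber ≤ (k - 1 : ℕ) := hcol.chromaticNumber_le
  rw [hχ, Nat.cast_le] at hle
  omega

/-- A proper colouring maximizing the sum of colours exists. -/
lemma exists_max_colouring (hχ : G.chromaticNumber = k) :
    ∃ c, IsProperColouring G k c ∧
      ∀ c', IsProperColouring G k c' → (∑ v, c' v) ≤ (∑ v, c v) := by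
  obtain ⟨c0, hc0⟩ := exists_proper hχ
  set S : Set ℕ := {m | ∃ c, IsProperColouring G k c ∧ (∑ v, c v) = m} with hS
  have hne : S.Nonempty := ⟨∑ v, c0 v, c0, hc0, rfl⟩
  have hbdd : BddAbove S := by
    refine ⟨Fintype.card V * k, ?_⟩
    rintro m ⟨c, hc, rfl⟩
    calc (∑ v, c v) ≤ ∑ _v : V, k := by
          refine Finset.sum_le_sum fun v _ => ?_
          have := hc.1 v; rw [Finset.mem_Icc] at this; exact this.2
      _ = Fintype.card V * k := by simp [Finset.sum_const, Finset.card_univ, mul_comm]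
  have hmem : sSup S ∈ S := Nat.sSup_mem hne hbdd
  obtain ⟨c, hc, hsum⟩ := hmem
  refine ⟨c, hc, fun c' hc' => ?_⟩
  rw [hsum]
  exact le_csSup hbdd ⟨c', hc', rfl⟩


/-- Main lemma: a rigid pair exists. -/
lemma exists_rigid_pair (hχ : G.chromaticNumber = k) (hconn : G.Connected)
    (hn : 2 ≤ Fintype.card V) (hnc : G ≠ ⊤) :
    ∃ (c : V → ℕ) (p q : V), IsProperColouring G k c ∧ p ≠ q ∧ Rigid G k c p q := by
  by_contra hcon
  push_neg at hcon
  have hk1 : 1 ≤ k := k_pos hχ hn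
  -- From no rigid pair: full vertices are pairwise adjacent with unique provision.
  have H : ∀ c : V → ℕ, IsProperColouring G k c → ∀ p q : V,
      Fullv G k c p → Fullv G k c q → p ≠ q →
      G.Adj p q ∧ ∀ x, G.Adj p x → c x = c q → x = q := by
    intro c hc p q hfp hfq hpq
    have hadj : G.Adj p q := by
      by_contra hna
      exact hcon c p q hc hpq (rigid_of_nonadj hfp hfq hna)
    refine ⟨hadj, fun x hx1 heq => ?_⟩
    by_contra hxq
    exact hcon c p q hc hpq (rigid_of_dup hfp hfq hadj hx1 hxq heq)
  obtain ⟨c, hc, hmax⟩ := exists_max_colouring hχ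
  have hbounds : ∀ v, 1 ≤ c v ∧ c v ≤ k := by
    intro v; have := hc.1 v; rw [Finset.mem_Icc] at this; exact this
  -- co-gradedness: every vertex sees every larger colour
  have hcog : ∀ v b, b ∈ Finset.Icc 1 k → c v < b → ∃ u, G.Adj v u ∧ c u = b := by
    intro v b hb hlt
    by_contra hno
    push_neg at hno
    set d : V → ℕ := Function.update c v b with hd
    have hdproper : IsProperColouring G k d := by
      constructor
      · intro w
        by_cases hw : w = v
        · subst hw; simp only [hd, Function.update_self]; exact hb
        · simp only [hd, Function.update_of_ne hw]; exact hc.1 w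
      · intro u w huw
        have hne := G.ne_of_adj huw
        simp only [hd, Function.update_apply]
        split_ifs with hu hw hw
        · exact absurd (hu.trans hw.symm) hne
        · exact fun h => hno w (hu ▸ huw) h.symm
        · exact fun h => hno u (hw ▸ huw.symm) h
        · exact hc.2 huw
    have hsum : (∑ w, c w) < (∑ w, d w) := by
      have h1 : (∑ w, d w) = b + ∑ w ∈ Finset.univ.erase v, c w := by
        rw [hd, Finset.sum_update_of_mem (Finset.mem_univ v)]
        congr 1
        apply Finset.sum_congr
        · ext w; simp [Finset.mem_erase, Finset.mem_sdiff, and_comm]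
        · intro w hw; rfl
      have h2 : (∑ w, c w) = c v + ∑ w ∈ Finset.univ.erase v, c w :=
        (Finset.add_sum_erase _ c (Finset.mem_univ v)).symm
      omega
    exact absurd (hmax d hdproper) (by omega)
  -- colour-1 vertices are full
  have hfull1 : ∀ v, c v = 1 → Fullv G k c v := by
    intro v hv b hb hbne
    refine hcog v b hb ?_
    rw [hv]
    rw [Finset.mem_Icc] at hb
    rcases Nat.lt_or_ge 1 b with h | h
    · exact h
    · exfalso; apply hbne; rw [hv]; omega
  -- key induction: every colour has a full vertex
  have hkey : ∀ j, 1 ≤ j → j ≤ k → ∃ f, c f = j ∧ Fullv G k c f := by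
    intro j
    induction j using Nat.strong_induction_on with
    | _ j IH =>
      intro hj1 hjk
      rcases eq_or_lt_of_le hj1 with hj1' | hj1'
      · -- j = 1
        obtain ⟨v, hv⟩ := used_all hχ hn hc 1 (Finset.mem_Icc.mpr ⟨le_refl 1, hk1⟩)
        exact ⟨v, by rw [hv, hj1'], hfull1 v hv⟩
      · -- j ≥ 2
        obtain ⟨f1, hf1c, hf1full⟩ := IH 1 hj1' le_rfl hk1
        have huniq1 : ∀ z, c z = 1 → z = f1 := by
          intro z hz
          by_contra hne
          have h2 := (H c hc z f1 (hfull1 z hz) hf1full hne).1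
          exact hc.2 h2 (by rw [hz, hf1c])
        by_cases hex : ∃ f, c f = j ∧ Fullv G k c f
        · exact hex
        push_neg at hex
        -- a neighbour of f1 coloured j
        obtain ⟨x0, hx0adj, hx0c⟩ :=
          hf1full j (Finset.mem_Icc.mpr ⟨hj1, hjk⟩) (by rw [hf1c]; omega)
        -- extraction of a missing smaller colour
        have hget : ∀ x, G.Adj f1 x → c x = j →
            ∃ a, 1 ≤ a ∧ a < j ∧ a ≠ 1 ∧ ∀ u, G.Adj x u → c u ≠ a := by
          intro x hadj hcx
          have hnf := hex x hcx
          rw [Fullv] at hnf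
          push_neg at hnf
          obtain ⟨b, hbIcc, hbne, hbno⟩ := hnf
          rw [Finset.mem_Icc] at hbIcc
          have hb1 : b ≠ 1 := by
            intro h
            exact hbno f1 hadj.symm (by rw [hf1c, h])
          have hbj : b < j := by
            rcases Nat.lt_or_ge b j with h | h
            · exact h
            · exfalso
              have hbne' : b ≠ j := by rw [hcx] at hbne; exact hbne
              have hbj' : c x < b := by rw [hcx]; omega
              obtain ⟨u, hu1, hu2⟩ := hcog x b (Finset.mem_Icc.mpr ⟨hbIcc.1, hbIcc.2⟩) hbj'
              exact hbno u hu1 hu2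
          exact ⟨b, hbIcc.1, hbj, hb1, hbno⟩
        obtain ⟨a, ha1, haj, hane1, hano⟩ := hget x0 hx0adj hx0c
        obtain ⟨fa, hfac, hfafull⟩ := IH a haj ha1 (le_trans (le_of_lt haj) hjk)
        have hx0fa : ¬ G.Adj x0 fa := fun h => hano fa h hfac
        have hx0nfa : x0 ≠ fa := by
          intro h
          rw [h, hfac] at hx0c
          omega
        have hf1x0 : f1 ≠ x0 := by
          intro h
          rw [← h, hf1c] at hx0c; omega
        have hfax0 : fa ≠ x0 := fun h => hx0nfa h.symm
        by_cases hx2 : ∃ x₂, G.Adj f1 x₂ ∧ c x₂ = j ∧ x₂ ≠ x0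
        · -- recolouring trick
          obtain ⟨x₂, hx₂adj, hx₂c, hx₂ne⟩ := hx2
          set d : V → ℕ := Function.update c x0 a with hd
          have hdval : ∀ w, w ≠ x0 → d w = c w := fun w hw => Function.update_of_ne hw _ _
          have hdproper : IsProperColouring G k d := by
            constructor
            · intro w
              by_cases hw : w = x0
              · subst hw; simp only [hd, Function.update_self]
                exact Finset.mem_Icc.mpr ⟨ha1, le_trans (le_of_lt haj) hjk⟩
              · rw [hdval w hw]; exact hc.1 w
            · intro u w huw
              have hne := G.ne_of_adj huw
              simp only [hd, Function.update_apply]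
              split_ifs with hu hw hw
              · exact absurd (hu.trans hw.symm) hne
              · exact fun h => hano w (hu ▸ huw) h.symm
              · exact fun h => hano u (hw ▸ huw.symm) h
              · exact hc.2 huw
          have hdf1 : Fullv G k d f1 := by
            intro b hb hbne
            rw [hdval f1 hf1x0] at hbne
            obtain ⟨u, hu1, hu2⟩ := hf1full b hb hbne
            by_cases hux : u = x0
            · refine ⟨x₂, hx₂adj, ?_⟩
              rw [hdval x₂ hx₂ne, hx₂c, ← hx0c, ← hux, hu2]
            · exact ⟨u, hu1, by rw [hdval u hux]; exact hu2⟩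
          have hdfa : Fullv G k d fa := by
            intro b hb hbne
            rw [hdval fa hfax0] at hbne
            obtain ⟨u, hu1, hu2⟩ := hfafull b hb hbne
            have hux : u ≠ x0 := by
              intro h
              exact hx0fa (G.adj_symm (h ▸ hu1))
            exact ⟨u, hu1, by rw [hdval u hux]; exact hu2⟩
          have hf1fa : f1 ≠ fa := by
            intro h
            rw [← h, hf1c] at hfac; omega
          have hmar := (H d hdproper f1 fa hdf1 hdfa hf1fa).2 x0 hx0adj
            (by rw [hdval fa hfax0, hfac]; simp [hd])
          exact (hx0nfa hmar).elim
        · -- swap trick: contradict that colour 1 is used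
          push_neg at hx2
          set e : V → ℕ := fun v => if v = f1 then j else if v = x0 then a else c v with he
          have heproper : IsProperColouring G k e := by
            constructor
            · intro w
              simp only [he]
              split_ifs
              · exact Finset.mem_Icc.mpr ⟨hj1, hjk⟩
              · exact Finset.mem_Icc.mpr ⟨ha1, le_trans (le_of_lt haj) hjk⟩
              · exact hc.1 w
            · intro u w huw
              have hne := G.ne_of_adj huw
              have hcuw := hc.2 huw
              by_cases hu1 : u = f1
              · by_cases hw1 : w = f1
                · exact absurd (hu1.trans hw1.symm) hne
                · by_cases hw0 : w = x0
                  · simp only [he, if_pos hu1, if_neg hw1, if_pos hw0]; omega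
                  · simp only [he, if_pos hu1, if_neg hw1, if_neg hw0]
                    intro hcw
                    exact hw0 (hx2 w (hu1 ▸ huw) hcw.symm)
              · by_cases hu0 : u = x0
                · by_cases hw1 : w = f1
                  · simp only [he, if_neg hu1, if_pos hu0, if_pos hw1]; omega
                  · by_cases hw0 : w = x0
                    · exact absurd (hu0.trans hw0.symm) hne
                    · simp only [he, if_neg hu1, if_pos hu0, if_neg hw1, if_neg hw0]
                      intro hcw
                      exact hano w (hu0 ▸ huw) hcw.symm
                · by_cases hw1 : w = f1
                  · simp only [he, if_neg hu1, if_neg hu0, if_pos hw1]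
                    intro hcw
                    exact hu0 (hx2 u (hw1 ▸ huw.symm) hcw)
                  · by_cases hw0 : w = x0
                    · simp only [he, if_neg hu1, if_neg hu0, if_neg hw1, if_pos hw0]
                      intro hcw
                      exact hano u (hw0 ▸ huw.symm) hcw
                    · simp only [he, if_neg hu1, if_neg hu0, if_neg hw1, if_neg hw0]
                      exact hcuw
          exfalso
          obtain ⟨z, hz⟩ := used_all hχ hn heproper 1 (Finset.mem_Icc.mpr ⟨le_rfl, hk1⟩)
          by_cases hz1 : z = f1
          · rw [show e z = j from by simp only [he, if_pos hz1]] at hz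
            omega
          · by_cases hz0 : z = x0
            · rw [show e z = a from by simp only [he, if_neg hz1, if_pos hz0]] at hz
              exact hane1 hz
            · rw [show e z = c z from by simp only [he, if_neg hz1, if_neg hz0]] at hz
              exact hz1 (huniq1 z hz)
  -- closure: fullness propagates along edges
  have hclosure : ∀ u v, G.Adj u v → Fullv G k c u → Fullv G k c v := by
    intro u v hadj hfu
    by_contra hnfv
    rw [Fullv] at hnfv
    push_neg at hnfv
    obtain ⟨a, haIcc, hane, hano⟩ := hnfv
    have hcu_ne_a : c u ≠ a := hano u hadj.symm
    have hcv : c v ∈ Finset.Icc 1 k := hc.1 v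
    rw [Finset.mem_Icc] at hcv
    obtain ⟨fj, hfjc, hfjfull⟩ := hkey (c v) hcv.1 hcv.2
    have hvfj : v ≠ fj := by
      intro h
      obtain ⟨u', hu'1, hu'2⟩ := hfjfull a haIcc (by rw [hfjc]; exact hane)
      exact hano u' (by rw [h]; exact hu'1) hu'2
    have hufj : u ≠ fj := by
      intro h
      exact hc.2 hadj (by rw [h, hfjc])
    have := (H c hc u fj hfu hfjfull hufj).2 v hadj (by rw [hfjc])
    exact hvfj this
  -- every vertex is full
  obtain ⟨f1, hf1c, hf1full⟩ := hkey 1 le_rfl hk1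
  have hwalk : ∀ (x y : V), G.Walk x y → Fullv G k c x → Fullv G k c y := by
    intro x y w
    induction w with
    | nil => exact id
    | cons h _ ih => exact fun hx => ih (hclosure _ _ h hx)
  have hallfull : ∀ v, Fullv G k c v := by
    intro v
    obtain ⟨w⟩ := hconn.preconnected f1 v
    exact hwalk f1 v w hf1full
  -- hence G is complete
  apply hnc
  ext u v
  simp only [SimpleGraph.top_adj]
  constructor
  · exact fun h => G.ne_of_adj h
  · intro hne
    exact (H c hc u v (hallfull u) (hallfull v) hne).1


theorem stmt_8' (G : SimpleGraph V) [DecidableRel G.Adj] (k : ℕ)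
    (hχ : G.chromaticNumber = k)
    (hconn : G.Connected)
    (hn : 2 ≤ Fintype.card V)
    (hnc : G ≠ ⊤) :
    (∃ ψ : V → Option ℕ, IsSudoku G k ψ ∧
        (Finset.univ.filter fun w => ψ w = none).card = 2) ∧
      sudokuNumber G k ≤ Fintype.card V - 2 := by
  obtain ⟨c, p, q, hc, hpq, hrigid⟩ := exists_rigid_pair hχ hconn hn hnc
  set ψ : V → Option ℕ := fun v => if v = p ∨ v = q then none else some (c v) with hψ
  have hψsome : ∀ v, v ≠ p → v ≠ q → ψ v = some (c v) := by
    intro v h1 h2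
    simp only [hψ]
    rw [if_neg (by tauto)]
  have hψval : ∀ v col, ψ v = some col → col = c v ∧ v ≠ p ∧ v ≠ q := by
    intro v col h
    by_cases hv : v = p ∨ v = q
    · simp only [hψ, if_pos hv] at h
      exact absurd h (by simp)
    · push_neg at hv
      refine ⟨?_, hv.1, hv.2⟩
      rw [hψsome v hv.1 hv.2] at h
      exact (Option.some_inj.mp h).symm
  have hsud : IsSudoku G k ψ := by
    constructor
    · constructor
      · intro v col h
        obtain ⟨hcol, -, -⟩ := hψval v col h
        rw [hcol]
        exact hc.1 v
      · intro u v huv col hu hv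
        obtain ⟨hcu, -, -⟩ := hψval u col hu
        obtain ⟨hcv, -, -⟩ := hψval v col hv
        exact hc.2 huv (by rw [← hcu, ← hcv])
    · refine ⟨c, ⟨hc, ?_⟩, ?_⟩
      · intro v col h
        exact (hψval v col h).1.symm
      · rintro φ ⟨hφ, hext⟩
        apply hrigid φ hφ
        intro v h1 h2
        exact hext v (c v) (hψsome v h1 h2)
  have hfilter : Finset.univ.filter (fun w => ψ w = none) = ({p, q} : Finset V) := by
    ext w
    simp only [Finset.mem_filter, Finset.mem_univ, true_and, Finset.mem_insert,
      Finset.mem_singleton, hψ]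
    constructor
    · intro h
      by_contra hcon
      push_neg at hcon
      rw [if_neg (by tauto)] at h
      exact Option.some_ne_none _ h
    · intro h
      rw [if_pos h]
  have hcard2 : (Finset.univ.filter fun w => ψ w = none).card = 2 := by
    rw [hfilter]
    exact Finset.card_pair hpq
  constructor
  · exact ⟨ψ, hsud, hcard2⟩
  · apply Nat.sInf_le
    refine ⟨ψ, hsud, ?_⟩
    have hpart := Finset.card_filter_add_card_filter_not
      (s := (Finset.univ : Finset V)) (p := fun w => (ψ w).isSome)
    have hneg : (Finset.univ.filter fun w => ¬ ((ψ w).isSome = true)) =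
        (Finset.univ.filter fun w => ψ w = none) := by
      apply Finset.filter_congr
      intro w _
      simp [Option.not_isSome_iff_eq_none]
    rw [hneg, hcard2, Finset.card_univ] at hpart
    omega

end Main

theorem stmt_8 {V : Type*} [Fintype V] [DecidableEq V]
    (G : SimpleGraph V) [DecidableRel G.Adj] (k : ℕ)
    (hχ : G.chromaticNumber = k)
    (hconn : G.Connected)
    (hn : 2 ≤ Fintype.card V)
    (hnc : G ≠ ⊤) :
    (∃ ψ : V → Option ℕ, IsSudoku G k ψ ∧
        (Finset.univ.filter fun w => ψ w = none).card = 2) ∧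
      sudokuNumber G k ≤ Fintype.card V - 2 :=
  stmt_8' G k hχ hconn hn hnc
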